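/- Let (X, μ) be a measure space, c_* > 0, and let ρ, ρ', θ, θ' : X → ℝ be measurable functions with ρ ≥ 0, ρ' ≥ 0 and θ ≥ c_* almost everywhere. Assume that ρ', |ρ'θ' − ρθ|, |ρ' − ρ| and ρ'·(θ' − θ)² are integrable. Then ∫ |ρ' − ρ| dμ ≤ (1/c_*)·[ ∫ |ρ'θ' − ρθ| dμ + (∫ ρ' dμ)^{1/2} · (∫ ρ'·(θ' − θ)² dμ)^{1/2} ]. -/

import Mathlib

open MeasureTheory

/-- First step of the strong-convergence proof: the L¹ distance of densities is controlled
by the L¹ distance of the products ρθ plus a weighted Cauchy–Schwarz term. -/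
theorem density_L1_estimate
    {X : Type*} [MeasurableSpace X] (μ : Measure X) (cs : ℝ) (hcs : 0 < cs)
    (ρ ρ' θ θ' : X → ℝ)
    (hρm : Measurable ρ) (hρ'm : Measurable ρ') (hθm : Measurable θ) (hθ'm : Measurable θ')
    (hρ : ∀ᵐ x ∂μ, 0 ≤ ρ x) (hρ' : ∀ᵐ x ∂μ, 0 ≤ ρ' x) (hθ : ∀ᵐ x ∂μ, cs ≤ θ x)
    (h1 : Integrable ρ' μ)
    (h2 : Integrable (fun x => ρ' x * θ' x - ρ x * θ x) μ)
    (h3 : Integrable (fun x => ρ' x - ρ x) μ)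
    (h4 : Integrable (fun x => ρ' x * (θ' x - θ x) ^ 2) μ) :
    ∫ x, |ρ' x - ρ x| ∂μ ≤ (1 / cs) *
      ((∫ x, |ρ' x * θ' x - ρ x * θ x| ∂μ) +
        Real.sqrt (∫ x, ρ' x ∂μ) * Real.sqrt (∫ x, ρ' x * (θ' x - θ x) ^ 2 ∂μ)) := by
  set f : X → ℝ := fun x => Real.sqrt (ρ' x) with hf
  set g : X → ℝ := fun x => Real.sqrt (ρ' x) * |θ' x - θ x| with hg
  have hfm : Measurable f := hρ'm.sqrt
  have hgm : Measurable g := hfm.mul ((hθ'm.sub hθm).abs)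
  -- f² = ρ' a.e., g² = ρ'(θ'-θ)² a.e.
  have hf2 : (fun x => f x ^ 2) =ᵐ[μ] ρ' := by
    filter_upwards [hρ'] with x hx
    simp [hf, Real.sq_sqrt hx]
  have hg2 : (fun x => g x ^ 2) =ᵐ[μ] (fun x => ρ' x * (θ' x - θ x) ^ 2) := by
    filter_upwards [hρ'] with x hx
    simp only [hg, mul_pow, sq_abs, Real.sq_sqrt hx]
  have hfg : (fun x => f x * g x) =ᵐ[μ] (fun x => ρ' x * |θ' x - θ x|) := by
    filter_upwards [hρ'] with x hx
    simp only [hf, hg, ← mul_assoc, Real.mul_self_sqrt hx]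
  have hfL2 : MemLp f 2 μ :=
    (memLp_two_iff_integrable_sq hfm.aestronglyMeasurable).2 (h1.congr hf2.symm)
  have hgL2 : MemLp g 2 μ :=
    (memLp_two_iff_integrable_sq hgm.aestronglyMeasurable).2 (h4.congr hg2.symm)
  -- integrability of ρ'|θ'-θ|
  have hint : Integrable (fun x => ρ' x * |θ' x - θ x|) μ := by
    refine Integrable.mono' ((h1.add h4).const_mul (1/2))
      (hρ'm.mul (hθ'm.sub hθm).abs).aestronglyMeasurable ?_
    filter_upwards [hρ'] with x hx
    rw [Real.norm_of_nonneg (mul_nonneg hx (abs_nonneg _))]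
    simp only [Pi.add_apply]
    have h := sq_nonneg (|θ' x - θ x| - 1)
    have h2 : |θ' x - θ x| ^ 2 = (θ' x - θ x) ^ 2 := sq_abs _
    nlinarith [mul_nonneg hx (sq_nonneg (|θ' x - θ x| - 1))]
  -- Cauchy-Schwarz
  have hCS : ∫ x, ρ' x * |θ' x - θ x| ∂μ ≤
      Real.sqrt (∫ x, ρ' x ∂μ) * Real.sqrt (∫ x, ρ' x * (θ' x - θ x) ^ 2 ∂μ) := by
    have hconj : (2 : ℝ).HolderConjugate 2 := Real.HolderConjugate.two_two
    have hfnn : 0 ≤ᵐ[μ] f := Filter.Eventually.of_forall fun x => Real.sqrt_nonneg _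
    have hgnn : 0 ≤ᵐ[μ] g :=
      Filter.Eventually.of_forall fun x => mul_nonneg (Real.sqrt_nonneg _) (abs_nonneg _)
    have h := integral_mul_le_Lp_mul_Lq_of_nonneg hconj hfnn hgnn
      (by simpa using hfL2) (by simpa using hgL2)
    calc ∫ x, ρ' x * |θ' x - θ x| ∂μ = ∫ x, f x * g x ∂μ := (integral_congr_ae hfg).symm
      _ ≤ (∫ x, f x ^ 2 ∂μ) ^ ((1:ℝ) / 2) * (∫ x, g x ^ 2 ∂μ) ^ ((1:ℝ) / 2) := by
          simpa using h
      _ = Real.sqrt (∫ x, ρ' x ∂μ) * Real.sqrt (∫ x, ρ' x * (θ' x - θ x) ^ 2 ∂μ) := by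
          rw [integral_congr_ae hf2, integral_congr_ae hg2,
            Real.sqrt_eq_rpow, Real.sqrt_eq_rpow]
  -- pointwise estimate and integration
  have hpt : ∀ᵐ x ∂μ, |ρ' x - ρ x| ≤
      (1 / cs) * (|ρ' x * θ' x - ρ x * θ x| + ρ' x * |θ' x - θ x|) := by
    filter_upwards [hρ', hθ] with x hx2 hx3
    have key : cs * |ρ' x - ρ x| ≤ |ρ' x * θ' x - ρ x * θ x| + ρ' x * |θ' x - θ x| := by
      have h1' : cs * |ρ' x - ρ x| ≤ θ x * |ρ' x - ρ x| :=
        mul_le_mul_of_nonneg_right (by linarith) (abs_nonneg _)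
      have h2' : θ x * |ρ' x - ρ x| = |(ρ' x - ρ x) * θ x| := by
        rw [abs_mul, abs_of_nonneg (by linarith : (0:ℝ) ≤ θ x), mul_comm]
      have h3' : (ρ' x - ρ x) * θ x = (ρ' x * θ' x - ρ x * θ x) - ρ' x * (θ' x - θ x) := by
        ring
      have h4' : |(ρ' x - ρ x) * θ x| ≤ |ρ' x * θ' x - ρ x * θ x| + |ρ' x * (θ' x - θ x)| := by
        rw [h3']; exact abs_sub _ _
      have h5' : |ρ' x * (θ' x - θ x)| = ρ' x * |θ' x - θ x| := by
        rw [abs_mul, abs_of_nonneg hx2]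
      linarith
    rw [div_mul_eq_mul_div, le_div_iff₀ hcs, one_mul, mul_comm]
    exact key
  have hmono : ∫ x, |ρ' x - ρ x| ∂μ ≤
      ∫ x, (1 / cs) * (|ρ' x * θ' x - ρ x * θ x| + ρ' x * |θ' x - θ x|) ∂μ :=
    integral_mono_ae h3.abs ((h2.abs.add hint).const_mul _) hpt
  rw [integral_const_mul, integral_add h2.abs hint] at hmono
  have := mul_le_mul_of_nonneg_left hCS (le_of_lt (by positivity : (0:ℝ) < 1 / cs))
  calc ∫ x, |ρ' x - ρ x| ∂μ
      ≤ (1 / cs) * ((∫ x, |ρ' x * θ' x - ρ x * θ x| ∂μ) + ∫ x, ρ' x * |θ' x - θ x| ∂μ) :=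
        hmono
    _ ≤ _ := by
        rw [mul_add, mul_add]
        gcongr
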